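/- Let h₁, h₂ be holomorphic with (h₁')² ≠ (h₂')², and set w₁ = h₁ + h₂, w₂ = h₁ − h₂, g₁ = e^{w₁}, g₂ = e^{w₂}. Then −16·g₁'·conj(g₂')·|g₁'·g₂'| / ((1 + g₁·conj(g₂))²·|1 + g₁·conj(g₂)|²) = −w₁'·conj(w₂')·|w₁'·w₂'| / (cosh²((w₁ + conj(w₂))/2)·|cosh((w₁+conj(w₂))/2)|²), wherever both denominators are nonzero. -/

import Mathlib

open Complex

theorem stmt9 (U : Set ℂ) (hU : IsOpen U) (h₁ h₂ : ℂ → ℂ)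
    (hh1 : DifferentiableOn ℂ h₁ U) (hh2 : DifferentiableOn ℂ h₂ U)
    (hne : ∀ z ∈ U, (deriv h₁ z) ^ 2 ≠ (deriv h₂ z) ^ 2)
    (w₁ w₂ g₁ g₂ : ℂ → ℂ)
    (hw₁ : ∀ z, w₁ z = h₁ z + h₂ z) (hw₂ : ∀ z, w₂ z = h₁ z - h₂ z)
    (hg₁ : ∀ z, g₁ z = Complex.exp (w₁ z)) (hg₂ : ∀ z, g₂ z = Complex.exp (w₂ z)) :
    ∀ z ∈ U, (1 + g₁ z * starRingEnd ℂ (g₂ z)) ≠ 0 →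
      Complex.cosh ((w₁ z + starRingEnd ℂ (w₂ z)) / 2) ≠ 0 →
      -16 * deriv g₁ z * starRingEnd ℂ (deriv g₂ z) *
          (‖deriv g₁ z * deriv g₂ z‖ : ℂ) /
        ((1 + g₁ z * starRingEnd ℂ (g₂ z)) ^ 2 *
          (‖1 + g₁ z * starRingEnd ℂ (g₂ z)‖ : ℂ) ^ 2) =
      -(deriv w₁ z) * starRingEnd ℂ (deriv w₂ z) *
          (‖deriv w₁ z * deriv w₂ z‖ : ℂ) /
        ((Complex.cosh ((w₁ z + starRingEnd ℂ (w₂ z)) / 2)) ^ 2 *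
          (‖Complex.cosh ((w₁ z + starRingEnd ℂ (w₂ z)) / 2)‖ : ℂ) ^ 2) := by
  intro z hz hd1 hd2
  have hh1z : DifferentiableAt ℂ h₁ z := (hh1 z hz).differentiableAt (hU.mem_nhds hz)
  have hh2z : DifferentiableAt ℂ h₂ z := (hh2 z hz).differentiableAt (hU.mem_nhds hz)
  have hw1f : w₁ = fun z => h₁ z + h₂ z := funext hw₁
  have hw2f : w₂ = fun z => h₁ z - h₂ z := funext hw₂
  have hw1d : DifferentiableAt ℂ w₁ z := by rw [hw1f]; exact hh1z.add hh2z
  have hw2d : DifferentiableAt ℂ w₂ z := by rw [hw2f]; exact hh1z.sub hh2z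
  have hg1f : g₁ = fun z => Complex.exp (w₁ z) := funext hg₁
  have hg2f : g₂ = fun z => Complex.exp (w₂ z) := funext hg₂
  have hdg1 : deriv g₁ z = Complex.exp (w₁ z) * deriv w₁ z := by
    rw [hg1f, deriv_cexp hw1d]
  have hdg2 : deriv g₂ z = Complex.exp (w₂ z) * deriv w₂ z := by
    rw [hg2f, deriv_cexp hw2d]
  set s : ℂ := w₁ z + starRingEnd ℂ (w₂ z) with hs
  set E2 : ℂ := Complex.exp (s / 2) with hE2
  set c : ℂ := Complex.cosh (s / 2) with hc
  have hexp2 : E2 * E2 = Complex.exp s := by rw [hE2, ← Complex.exp_add]; ring_nf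
  have hfac : 1 + g₁ z * starRingEnd ℂ (g₂ z) = E2 * (2 * c) := by
    rw [hg₁, hg₂, ← Complex.exp_conj, ← Complex.exp_add, ← hs, hc, Complex.cosh,
      hE2]
    have h2 : Complex.exp (s / 2) * Complex.exp (-(s / 2)) = 1 := by
      rw [← Complex.exp_add]; simp
    have h1 : Complex.exp (s / 2) * Complex.exp (s / 2) = Complex.exp s := by
      rw [← Complex.exp_add]; ring_nf
    linear_combination -h1 - h2
  have hpq : Complex.exp (w₁ z) * starRingEnd ℂ (Complex.exp (w₂ z)) = E2 * E2 := by
    rw [← Complex.exp_conj, ← Complex.exp_add, ← hs, hexp2]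
  -- modulus facts
  have habs1 : ‖Complex.exp (w₁ z)‖ * ‖Complex.exp (w₂ z)‖
      = ‖E2‖ * ‖E2‖ := by
    have h12 : s / 2 + s / 2 = s := by ring
    rw [← norm_mul, ← norm_mul, hE2, ← Complex.exp_add, ← Complex.exp_add, h12,
      Complex.norm_exp, Complex.norm_exp]
    simp [hs, Complex.add_re, Complex.conj_re]
  have habsdg : (‖deriv g₁ z * deriv g₂ z‖ : ℂ)
      = (‖deriv w₁ z * deriv w₂ z‖ : ℂ) * ((‖E2‖ : ℂ) * (‖E2‖ : ℂ)) := by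
    rw [hdg1, hdg2]
    have : ‖Complex.exp (w₁ z) * deriv w₁ z * (Complex.exp (w₂ z) * deriv w₂ z)‖
        = ‖deriv w₁ z * deriv w₂ z‖ * (‖E2‖ * ‖E2‖) := by
      rw [← habs1]
      simp [norm_mul]
      ring
    rw [this]
    push_cast
    ring
  have habsfac : (‖1 + g₁ z * starRingEnd ℂ (g₂ z)‖ : ℂ)
      = (‖E2‖ : ℂ) * (2 * (‖c‖ : ℂ)) := by
    rw [hfac, norm_mul, norm_mul]
    push_cast
    simp
  -- nonvanishing
  have hE2ne : E2 ≠ 0 := Complex.exp_ne_zero _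
  have hE2abs : (‖E2‖ : ℂ) ≠ 0 := by
    simpa using hE2ne
  have hcabs : (‖c‖ : ℂ) ≠ 0 := by
    simpa using hd2
  have hden2 : c ^ 2 * (‖c‖ : ℂ) ^ 2 ≠ 0 :=
    mul_ne_zero (pow_ne_zero _ hd2) (pow_ne_zero _ hcabs)
  have hden1 : (E2 * (2 * c)) ^ 2 * ((‖E2‖ : ℂ) * (2 * (‖c‖ : ℂ))) ^ 2 ≠ 0 := by
    apply mul_ne_zero <;> apply pow_ne_zero
    · exact mul_ne_zero hE2ne (mul_ne_zero two_ne_zero hd2)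
    · exact mul_ne_zero hE2abs (mul_ne_zero two_ne_zero hcabs)
  rw [habsdg, habsfac, hfac, hdg1, hdg2, map_mul, div_eq_div_iff hden1 hden2]
  linear_combination (-16 * deriv w₁ z * starRingEnd ℂ (deriv w₂ z) *
    (‖deriv w₁ z * deriv w₂ z‖ : ℂ) * (‖E2‖ : ℂ) ^ 2 *
    c ^ 2 * (‖c‖ : ℂ) ^ 2) * hpq
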